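/- Let n ≥ 1 and let S ⊆ {1,…,2n} be a subset of cardinality n. Then sgn(σ_S) = (−1)^(ΣS + ⌈n/2⌉), where ΣS denotes the sum of the elements of S and ⌈·⌉ the ceiling function. -/

import Mathlib

noncomputable section

/-- The permutation `σ_S` attached to a subset `S ⊆ {1,…,2n}` of cardinality `n`
(indices are 0-based, so `Fin (n+n)` value `i` represents the element `i+1`):
it carries `{1,…,n}` onto `S` in increasing order and `{n+1,…,2n}` onto the
complement of `S` in increasing order.  (Junk value `1` if `S.card ≠ n`.) -/
def sigmaPerm (n : ℕ) (S : Finset (Fin (n + n))) : Equiv.Perm (Fin (n + n)) :=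
  if h : S.card = n then
    finSumFinEquiv.symm.trans
      ((Equiv.sumCongr (S.orderIsoOfFin h).toEquiv
          ((Sᶜ.orderIsoOfFin (by
              rw [Finset.card_compl, h, Fintype.card_fin]; omega)).toEquiv)).trans
        ((Equiv.sumCongr (Equiv.refl _)
            (Equiv.subtypeEquivRight fun _ => Finset.mem_compl)).trans
          (Equiv.sumCompl (· ∈ S))))
  else 1


section Helpers
open Equiv

lemma compl_card {n : ℕ} {S : Finset (Fin (n+n))} (h : S.card = n) : Sᶜ.card = n := by
  rw [Finset.card_compl, h, Fintype.card_fin]; omega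

lemma sigmaPerm_castAdd {n : ℕ} {S : Finset (Fin (n+n))} (h : S.card = n) (i : Fin n) :
    sigmaPerm n S (Fin.castAdd n i) = S.orderEmbOfFin h i := by
  rw [sigmaPerm, dif_pos h, Equiv.trans_apply, finSumFinEquiv_symm_apply_castAdd]
  simp [Finset.coe_orderIsoOfFin_apply]

lemma sigmaPerm_natAdd {n : ℕ} {S : Finset (Fin (n+n))} (h : S.card = n) (i : Fin n) :
    sigmaPerm n S (Fin.natAdd n i) = Sᶜ.orderEmbOfFin (compl_card h) i := by
  rw [sigmaPerm, dif_pos h, Equiv.trans_apply, finSumFinEquiv_symm_apply_natAdd]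
  simp [Finset.coe_orderIsoOfFin_apply]

lemma orderEmbOfFin_swap {m k : ℕ} {T T' : Finset (Fin m)} {a b : Fin m}
    (hT : T.card = k) (hT' : T'.card = k)
    (hTT' : T' = T.map (Equiv.swap a b).toEmbedding)
    (hab : (b : ℕ) = (a : ℕ) + 1) (hnot : ¬(a ∈ T ∧ b ∈ T)) (i : Fin k) :
    T'.orderEmbOfFin hT' i = Equiv.swap a b (T.orderEmbOfFin hT i) := by
  have hane : a ≠ b := by intro h; rw [h] at hab; omega
  have hmem : ∀ j, Equiv.swap a b (T.orderEmbOfFin hT j) ∈ T' := by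
    intro j
    rw [hTT']
    exact Finset.mem_map_of_mem _ (T.orderEmbOfFin_mem hT j)
  have hmono : StrictMono fun j => Equiv.swap a b (T.orderEmbOfFin hT j) := by
    intro p q hpq
    have huv : T.orderEmbOfFin hT p < T.orderEmbOfFin hT q :=
      (T.orderEmbOfFin hT).strictMono hpq
    set u := T.orderEmbOfFin hT p with hu
    set v := T.orderEmbOfFin hT q with hv
    have huT : u ∈ T := T.orderEmbOfFin_mem hT p
    have hvT : v ∈ T := T.orderEmbOfFin_mem hT q
    simp only []
    have huvlt : (u : ℕ) < (v : ℕ) := huv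
    rcases eq_or_ne u a with rfl | hua
    · -- u = a, so a ∈ T hence b ∉ T, v ≠ b, v ≠ a
      have hbT : b ∉ T := fun hb => hnot ⟨huT, hb⟩
      have hvb : v ≠ b := fun h => hbT (h ▸ hvT)
      have hva : v ≠ u := huv.ne'
      rw [Equiv.swap_apply_left, Equiv.swap_apply_of_ne_of_ne hva hvb]
      have : (v : ℕ) ≠ (b : ℕ) := fun h => hvb (Fin.ext h)
      exact Fin.lt_def.mpr (by omega)
    · rcases eq_or_ne u b with rfl | hub
      · -- u = b, a ∉ T, v > b
        have haT : a ∉ T := fun ha => hnot ⟨ha, huT⟩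
        have hva : v ≠ a := fun h => haT (h ▸ hvT)
        have hvb : v ≠ u := huv.ne'
        rw [Equiv.swap_apply_right, Equiv.swap_apply_of_ne_of_ne hva hvb]
        exact Fin.lt_def.mpr (by have := Fin.lt_def.mp huv; omega)
      · rw [Equiv.swap_apply_of_ne_of_ne hua hub]
        rcases eq_or_ne v a with rfl | hva
        · -- v = a : u < a < b
          rw [Equiv.swap_apply_left]
          exact Fin.lt_def.mpr (by omega)
        · rcases eq_or_ne v b with rfl | hvb
          · -- v = b : u < b, u ≠ a, so u < a
            rw [Equiv.swap_apply_right]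
            have : (u : ℕ) ≠ (a : ℕ) := fun h => hua (Fin.ext h)
            exact Fin.lt_def.mpr (by omega)
          · rw [Equiv.swap_apply_of_ne_of_ne hva hvb]; exact huv
  have := Finset.orderEmbOfFin_unique hT' hmem hmono
  exact (congrFun this i).symm

lemma sigmaPerm_swap {n : ℕ} {S : Finset (Fin (n+n))} (hS : S.card = n)
    {a b : Fin (n+n)} (hab : (b : ℕ) = (a : ℕ) + 1) (ha : a ∉ S) (hb : b ∈ S) :
    sigmaPerm n (S.map (Equiv.swap a b).toEmbedding)
      = Equiv.swap a b * sigmaPerm n S := by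
  set S' := S.map (Equiv.swap a b).toEmbedding with hS'def
  have hS' : S'.card = n := by rw [Finset.card_map]; exact hS
  have hcompl : S'ᶜ = Sᶜ.map (Equiv.swap a b).toEmbedding := by
    ext x
    simp only [Finset.mem_compl, hS'def, Finset.mem_map_equiv, Equiv.symm_swap]
  ext x
  induction x using Fin.addCases with
  | left i =>
      rw [Equiv.Perm.mul_apply, sigmaPerm_castAdd hS' i, sigmaPerm_castAdd hS i]
      exact congrArg _ (orderEmbOfFin_swap hS hS' hS'def hab (fun h => ha h.1) i)
  | right j =>
      rw [Equiv.Perm.mul_apply, sigmaPerm_natAdd hS' j, sigmaPerm_natAdd hS j]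
      exact congrArg _ (orderEmbOfFin_swap (compl_card hS) (compl_card hS') hcompl hab
        (fun h => (Finset.mem_compl.mp h.2) hb) j)

lemma sigmaPerm_base {n : ℕ} :
    sigmaPerm n (Finset.map (Fin.castAddOrderEmb n).toEmbedding
      (Finset.univ : Finset (Fin n))) = 1 := by
  set S₀ : Finset (Fin (n+n)) :=
    Finset.map (Fin.castAddOrderEmb n).toEmbedding Finset.univ with hS₀
  have hcard : S₀.card = n := by
    rw [Finset.card_map, Finset.card_univ, Fintype.card_fin]
  have hmemS₀ : ∀ x : Fin (n+n), x ∈ S₀ ↔ (x : ℕ) < n := by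
    intro x
    constructor
    · rintro hx
      rw [hS₀, Finset.mem_map] at hx
      obtain ⟨i, -, rfl⟩ := hx
      exact i.isLt
    · intro hx
      rw [hS₀, Finset.mem_map]
      exact ⟨⟨(x : ℕ), hx⟩, Finset.mem_univ _, Fin.ext (by rfl)⟩
  have h1 : ∀ i, S₀.orderEmbOfFin hcard i = Fin.castAdd n i := by
    intro i
    refine (congrFun (Finset.orderEmbOfFin_unique hcard
      (f := fun i : Fin n => Fin.castAdd n i) (fun i => ?_)
      (Fin.strictMono_castAdd n)) i).symm
    exact (hmemS₀ _).mpr (by simp)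
  have h2 : ∀ i, S₀ᶜ.orderEmbOfFin (compl_card hcard) i = Fin.natAdd n i := by
    intro i
    refine (congrFun (Finset.orderEmbOfFin_unique (compl_card hcard)
      (f := fun i : Fin n => Fin.natAdd n i) (fun i => ?_)
      (Fin.strictMono_natAdd n)) i).symm
    rw [Finset.mem_compl, hmemS₀]
    simp
  ext x
  induction x using Fin.addCases with
  | left i => rw [sigmaPerm_castAdd hcard i]; exact congrArg _ (h1 i)
  | right j => rw [sigmaPerm_natAdd hcard j]; exact congrArg _ (h2 j)


end Helpers

/-- The sign `sgn(σ_S)`. -/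
def sgnS (n : ℕ) (S : Finset (Fin (n + n))) : ℤˣ :=
  Equiv.Perm.sign (sigmaPerm n S)

/-- For `S ⊆ {1,…,2n}` of cardinality `n`, `sgn(σ_S) = (−1)^(ΣS + ⌈n/2⌉)`. -/
theorem stmt0 (n : ℕ) (hn : 1 ≤ n) (S : Finset (Fin (n + n))) (hS : S.card = n) :
    sgnS n S =
      (-1 : ℤˣ) ^ (((∑ i ∈ S, ((i : ℕ) + 1) : ℕ) : ℤ) + ⌈(n : ℚ) / 2⌉) := by
  -- compute the ceiling
  have hceil : ⌈(n : ℚ) / 2⌉ = (((n + 1) / 2 : ℕ) : ℤ) := by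
    rcases Nat.even_or_odd n with ⟨m, rfl⟩ | ⟨m, rfl⟩
    · rw [show ((m + m : ℕ) : ℚ) / 2 = ((m : ℤ) : ℚ) by push_cast; ring,
        Int.ceil_intCast]
      omega
    · have h1 : ⌈(1/2 : ℚ)⌉ = 1 := by rw [Int.ceil_eq_iff] <;> norm_num
      rw [show ((2 * m + 1 : ℕ) : ℚ) / 2 = 1/2 + ((m : ℤ) : ℚ) by push_cast; ring,
        Int.ceil_add_intCast, h1]
      omega
  rw [hceil]
  suffices H : ∀ N : ℕ, ∀ S : Finset (Fin (n + n)), S.card = n →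
      (∑ i ∈ S, ((i : ℕ) + 1)) = N →
      sgnS n S = (-1 : ℤˣ) ^ ((N : ℤ) + (((n + 1) / 2 : ℕ) : ℤ)) by
    exact H _ S hS rfl
  intro N
  induction N using Nat.strong_induction_on with
  | _ N ih =>
  intro S hS hN
  by_cases hex : ∃ a b : Fin (n + n), (b : ℕ) = (a : ℕ) + 1 ∧ a ∉ S ∧ b ∈ S
  · obtain ⟨a, b, hab, ha, hb⟩ := hex
    set S' := S.map (Equiv.swap a b).toEmbedding with hS'def
    have hS' : S'.card = n := by rw [Finset.card_map]; exact hS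
    have hsum : (∑ i ∈ S', ((i : ℕ) + 1)) + 1 = N := by
      rw [hS'def, Finset.sum_map]
      have hsplit : ∀ T : Finset (Fin (n+n)), b ∈ T →
          ∀ f : Fin (n+n) → ℕ, ∑ i ∈ T, f i = ∑ i ∈ T.erase b, f i + f b := by
        intro T hbT f
        exact (Finset.sum_erase_add T f hbT).symm
      rw [hsplit S hb, ← hN, hsplit S hb]
      have heq : ∀ i ∈ S.erase b,
          (((Equiv.swap a b).toEmbedding i : Fin (n+n)) : ℕ) + 1 = (i : ℕ) + 1 := by
        intro i hi
        have hib : i ≠ b := Finset.ne_of_mem_erase hi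
        have hia : i ≠ a := fun h => ha (h ▸ Finset.mem_of_mem_erase hi)
        rw [Equiv.coe_toEmbedding, Equiv.swap_apply_of_ne_of_ne hia hib]
      rw [Finset.sum_congr rfl heq]
      have : (((Equiv.swap a b).toEmbedding b : Fin (n+n)) : ℕ) = (a : ℕ) := by
        rw [Equiv.coe_toEmbedding, Equiv.swap_apply_right]
      omega
    have hlt : (∑ i ∈ S', ((i : ℕ) + 1)) < N := by omega
    have hrec := ih _ hlt S' hS' rfl
    have hane : a ≠ b := fun h => by rw [h] at hab; omega
    have hsig : sgnS n S' = - sgnS n S := by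
      rw [sgnS, sgnS, sigmaPerm_swap hS hab ha hb, map_mul,
        Equiv.Perm.sign_swap hane, neg_one_mul]
    rw [← neg_neg (sgnS n S), ← hsig, hrec]
    have hNz : (N : ℤ) = ((∑ i ∈ S', ((i : ℕ) + 1) : ℕ) : ℤ) + 1 := by
      omega
    rw [hNz]
    rw [show ((∑ i ∈ S', ((i : ℕ) + 1) : ℕ) : ℤ) + 1 + (((n + 1) / 2 : ℕ) : ℤ)
        = (((∑ i ∈ S', ((i : ℕ) + 1) : ℕ) : ℤ) + (((n + 1) / 2 : ℕ) : ℤ)) + 1 by ring,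
      zpow_add_one, mul_neg_one]
  · -- S is downward closed, hence S = S₀
    push_neg at hex
    have hdc : ∀ a b : Fin (n + n), (b : ℕ) = (a : ℕ) + 1 → b ∈ S → a ∈ S := by
      intro a b h hb
      by_contra haS
      exact (hex a b h haS) hb
    have key : ∀ d : ℕ, ∀ x ∈ S, ∀ y : Fin (n + n), (y : ℕ) + d = (x : ℕ) → y ∈ S := by
      intro d
      induction d with
      | zero => intro x hx y hy; have : y = x := Fin.ext (by omega); rwa [this]
      | succ d ihd =>
          intro x hx y hy
          have hz : (y : ℕ) + 1 < n + n := by have := x.isLt; omega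
          have hzS : (⟨(y : ℕ) + 1, hz⟩ : Fin (n + n)) ∈ S :=
            ihd x hx _ (by simp; omega)
          exact hdc y _ rfl hzS
    have hbound : ∀ x ∈ S, (x : ℕ) < n := by
      intro x hx
      by_contra hge
      push_neg at hge
      have hle : (x : ℕ) + 1 ≤ n + n := x.isLt
      have hsub : (Finset.univ : Finset (Fin ((x : ℕ) + 1))).map
          (Fin.castLEOrderEmb hle).toEmbedding ⊆ S := by
        intro y hy
        rw [Finset.mem_map] at hy
        obtain ⟨i, -, rfl⟩ := hy
        exact key ((x : ℕ) - (i : ℕ)) x hx _ (by show (i : ℕ) + ((x : ℕ) - (i : ℕ)) = (x : ℕ); have := i.isLt; omega)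
      have hcard := Finset.card_le_card hsub
      rw [Finset.card_map, Finset.card_univ, Fintype.card_fin, hS] at hcard
      omega
    set S₀ : Finset (Fin (n + n)) :=
      Finset.map (Fin.castAddOrderEmb n).toEmbedding Finset.univ with hS₀
    have hcard₀ : S₀.card = n := by
      rw [Finset.card_map, Finset.card_univ, Fintype.card_fin]
    have hsub : S ⊆ S₀ := by
      intro x hx
      rw [hS₀, Finset.mem_map]
      exact ⟨⟨(x : ℕ), hbound x hx⟩, Finset.mem_univ _, Fin.ext (by rfl)⟩
    have hSeq : S = S₀ := Finset.eq_of_subset_of_card_le hsub (by rw [hcard₀, hS])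
    have hsgn : sgnS n S = 1 := by
      rw [sgnS, hSeq, sigmaPerm_base, map_one]
    -- compute N
    have hNval : 2 * N = n * (n + 1) := by
      rw [← hN, hSeq, hS₀, Finset.sum_map]
      have : ∀ i : Fin n, (((Fin.castAddOrderEmb n).toEmbedding i : Fin (n+n)) : ℕ) + 1
          = (i : ℕ) + 1 := by intro i; rfl
      rw [Finset.sum_congr rfl (fun i _ => this i), Fin.sum_univ_eq_sum_range
        (fun i => i + 1) n, Finset.sum_add_distrib, Finset.sum_const,
        Finset.card_range, smul_eq_mul, mul_one]
      have hGauss := Finset.sum_range_id_mul_two n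
      obtain ⟨k, rfl⟩ : ∃ k, n = k + 1 := ⟨n - 1, by omega⟩
      simp only [Nat.add_sub_cancel] at hGauss
      have hring : (k + 1) * (k + 1 + 1) = (k + 1) * k + 2 * (k + 1) := by ring
      omega
    rw [hsgn]
    have heven : Even (N + (n + 1) / 2) := by
      rcases Nat.even_or_odd n with ⟨m, rfl⟩ | ⟨m, rfl⟩
      · have h2 : 2 * N = 2 * (m * (m + m + 1)) := by rw [hNval]; ring
        have hNeq : N = m * (m + m + 1) := by omega
        have hring : m * (m + m + 1) = m * m + m * m + m := by ring
        exact ⟨m * m + m, by rw [hNeq]; omega⟩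
      · have h2 : 2 * N = 2 * ((2 * m + 1) * (m + 1)) := by rw [hNval]; ring
        have hNeq : N = (2 * m + 1) * (m + 1) := by omega
        refine ⟨(m + 1) * (m + 1), ?_⟩
        rw [hNeq]
        have hring : (2 * m + 1) * (m + 1) + (m + 1)
            = (m + 1) * (m + 1) + (m + 1) * (m + 1) := by ring
        omega
    rw [show ((N : ℤ) + (((n + 1) / 2 : ℕ) : ℤ)) = ((N + (n + 1) / 2 : ℕ) : ℤ) by push_cast; ring,
      zpow_natCast]
    exact (heven.neg_one_pow).symm
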